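/- Let K ≥ 1, let h ∈ ℂ^{M_r}, P_r ≥ 0, and for each k ∈ {1,…,K} let H_k ∈ ℂ^{M_r × M_k} and P_k ≥ 0. Set α_k = λ_max(H_k H_kᴴ) and R̃ = Σ_{k=1}^K P_k · H_k H_kᴴ. Then the TDMA sum rate is at least the joint relaying sum rate: log₂(1 + ‖h‖²P_r) − log₂(1 + ‖h‖²P_r/(1 + Σ_{k=1}^K α_k P_k)) ≥ log₂(1 + ‖h‖²P_r) − log₂(1 + ‖h‖²P_r/(1 + λ_max(R̃))). -/

import Mathlib

open Matrix
open scoped ComplexOrder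

open Classical in
/-- The largest eigenvalue of a (Hermitian) complex matrix. -/
noncomputable def lambdaMax {n : ℕ} (M : Matrix (Fin n) (Fin n) ℂ) : ℝ :=
  if h : M.IsHermitian then ⨆ i, h.eigenvalues i else 0

lemma lambdaMax_eq {n : ℕ} {M : Matrix (Fin n) (Fin n) ℂ} (hM : M.IsHermitian) :
    lambdaMax M = ⨆ i, hM.eigenvalues i := by
  simp [lambdaMax, hM]

lemma eigenvalues_le_lambdaMax {n : ℕ} {M : Matrix (Fin n) (Fin n) ℂ} (hM : M.IsHermitian)
    (i : Fin n) : hM.eigenvalues i ≤ lambdaMax M := by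
  have : Nonempty (Fin n) := ⟨i⟩
  rw [lambdaMax_eq hM]
  exact le_ciSup (Set.Finite.bddAbove (Set.finite_range _)) i

lemma lambdaMax_nonneg {n : ℕ} {M : Matrix (Fin n) (Fin n) ℂ} (hM : M.PosSemidef) :
    0 ≤ lambdaMax M := by
  rcases isEmpty_or_nonempty (Fin n) with he | hne
  · rw [lambdaMax_eq hM.1, Real.iSup_of_isEmpty]
  · obtain ⟨i⟩ := hne
    exact le_trans (hM.eigenvalues_nonneg i) (eigenvalues_le_lambdaMax hM.1 i)

/-- Rayleigh quotient bound. -/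
lemma rayleigh_le {n : ℕ} {M : Matrix (Fin n) (Fin n) ℂ} (hM : M.IsHermitian)
    (x : Fin n → ℂ) :
    Complex.re (dotProduct (star x) (M *ᵥ x)) ≤
      lambdaMax M * Complex.re (dotProduct (star x) x) := by
  set U : Matrix (Fin n) (Fin n) ℂ := (hM.eigenvectorUnitary : Matrix (Fin n) (Fin n) ℂ) with hU
  set y : Fin n → ℂ := star U *ᵥ x with hy
  have hsy : star y = star x ᵥ* U := by
    rw [hy, star_mulVec, star_eq_conjTranspose, conjTranspose_conjTranspose]
  have key : dotProduct (star x) (M *ᵥ x) =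
      dotProduct (star y) ((diagonal (Complex.ofReal ∘ hM.eigenvalues)) *ᵥ y) := by
    conv_lhs => rw [hM.spectral_theorem, Unitary.conjStarAlgAut_apply]
    rw [← mulVec_mulVec, ← mulVec_mulVec, dotProduct_mulVec, hsy, hy]
    rfl
  have hyy : dotProduct (star y) y = dotProduct (star x) x := by
    rw [hsy, hy, dotProduct_mulVec, vecMul_vecMul,
      (Matrix.mem_unitaryGroup_iff).mp hM.eigenvectorUnitary.2]
    simp
  have hdiag : Complex.re (dotProduct (star y) ((diagonal (Complex.ofReal ∘ hM.eigenvalues)) *ᵥ y))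
      = ∑ i, hM.eigenvalues i * Complex.normSq (y i) := by
    rw [dotProduct, Complex.re_sum]
    refine Finset.sum_congr rfl fun i _ => ?_
    rw [mulVec_diagonal]
    simp only [Pi.star_apply, Function.comp_apply]
    rw [show (star (y i)) * ((hM.eigenvalues i : ℂ) * y i)
        = (hM.eigenvalues i : ℂ) * ((star (y i)) * y i) by ring]
    rw [Complex.star_def, ← Complex.normSq_eq_conj_mul_self]
    simp
  have hyy' : Complex.re (dotProduct (star y) y) = ∑ i, Complex.normSq (y i) := by
    rw [dotProduct, Complex.re_sum]
    refine Finset.sum_congr rfl fun i _ => ?_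
    rw [Pi.star_apply, Complex.star_def, ← Complex.normSq_eq_conj_mul_self]
    simp
  rw [key, hdiag, ← hyy, hyy', Finset.mul_sum]
  exact Finset.sum_le_sum fun i _ => mul_le_mul_of_nonneg_right
    (eigenvalues_le_lambdaMax hM i) (Complex.normSq_nonneg _)

lemma sum_mulVec' {K n : ℕ} (A : Fin K → Matrix (Fin n) (Fin n) ℂ) (x : Fin n → ℂ) :
    (∑ k, A k) *ᵥ x = ∑ k, A k *ᵥ x :=
  map_sum (Matrix.mulVec.addMonoidHomLeft x) A Finset.univ

lemma dotProduct_sum' {K n : ℕ} (v : Fin n → ℂ) (w : Fin K → Fin n → ℂ) :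
    dotProduct v (∑ k, w k) = ∑ k, dotProduct v (w k) := by
  simp only [dotProduct, Finset.sum_apply, Finset.mul_sum]
  exact Finset.sum_comm ..

lemma sum_smul_isHermitian {K Mr : ℕ} {M : Fin K → ℕ} (H : ∀ k, Matrix (Fin Mr) (Fin (M k)) ℂ)
    (P : Fin K → ℝ) : (∑ k, P k • (H k * (H k)ᴴ)).IsHermitian := by
  unfold Matrix.IsHermitian
  rw [conjTranspose_sum]
  exact Finset.sum_congr rfl fun k _ => by
    rw [conjTranspose_smul, star_trivial, (isHermitian_mul_conjTranspose_self (H k)).eq]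

lemma sum_smul_posSemidef {K Mr : ℕ} {M : Fin K → ℕ} (H : ∀ k, Matrix (Fin Mr) (Fin (M k)) ℂ)
    (P : Fin K → ℝ) (hP : ∀ k, 0 ≤ P k) : (∑ k, P k • (H k * (H k)ᴴ)).PosSemidef := by
  refine .of_dotProduct_mulVec_nonneg (sum_smul_isHermitian H P) fun x => ?_
  rw [sum_mulVec']
  rw [show (∑ k, (P k • (H k * (H k)ᴴ)) *ᵥ x) = ∑ k, P k • ((H k * (H k)ᴴ) *ᵥ x) from
    Finset.sum_congr rfl fun k _ => smul_mulVec _ _ _]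
  rw [dotProduct_sum']
  refine Finset.sum_nonneg fun k _ => ?_
  rw [dotProduct_smul]
  exact smul_nonneg (hP k) ((posSemidef_self_mul_conjTranspose (H k)).dotProduct_mulVec_nonneg x)

lemma lambdaMax_sum_le {K Mr : ℕ} {M : Fin K → ℕ} (H : ∀ k, Matrix (Fin Mr) (Fin (M k)) ℂ)
    (P : Fin K → ℝ) (hP : ∀ k, 0 ≤ P k) :
    lambdaMax (∑ k, P k • (H k * (H k)ᴴ)) ≤ ∑ k, lambdaMax (H k * (H k)ᴴ) * P k := by
  have hA : ∀ k, (H k * (H k)ᴴ).IsHermitian := fun k => isHermitian_mul_conjTranspose_self _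
  have hS := sum_smul_isHermitian H P
  have hRHS : 0 ≤ ∑ k, lambdaMax (H k * (H k)ᴴ) * P k :=
    Finset.sum_nonneg fun k _ =>
      mul_nonneg (lambdaMax_nonneg (posSemidef_self_mul_conjTranspose _)) (hP k)
  rcases isEmpty_or_nonempty (Fin Mr) with he | hne
  · rw [lambdaMax_eq hS, Real.iSup_of_isEmpty]
    exact hRHS
  · obtain ⟨i₀, hi₀⟩ := exists_eq_ciSup_of_finite (f := hS.eigenvalues)
    rw [lambdaMax_eq hS, ← hi₀]
    set v : Fin Mr → ℂ := ⇑(hS.eigenvectorBasis i₀) with hv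
    have hvv : Complex.re (dotProduct (star v) v) = 1 := by
      have h1 : dotProduct (star v) v =
          (inner ℂ (hS.eigenvectorBasis i₀) (hS.eigenvectorBasis i₀) : ℂ) := by
        rw [EuclideanSpace.inner_eq_star_dotProduct, dotProduct_comm]
      have h2 : ‖hS.eigenvectorBasis i₀‖ = 1 := hS.eigenvectorBasis.orthonormal.1 i₀
      rw [h1, @inner_self_eq_norm_sq_to_K ℂ, h2]
      norm_num
    have heig := hS.eigenvalues_eq i₀
    rw [heig]
    have hexp : (∑ k, P k • (H k * (H k)ᴴ)) *ᵥ v = ∑ k, P k • ((H k * (H k)ᴴ) *ᵥ v) := by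
      rw [sum_mulVec']
      exact Finset.sum_congr rfl fun k _ => smul_mulVec _ _ _
    rw [hexp, dotProduct_sum', map_sum]
    refine Finset.sum_le_sum fun k _ => ?_
    rw [dotProduct_smul, RCLike.smul_re]
    have hb := rayleigh_le (hA k) v
    rw [hvv, mul_one] at hb
    calc P k * RCLike.re (dotProduct (star v) ((H k * (H k)ᴴ) *ᵥ v))
        ≤ P k * lambdaMax (H k * (H k)ᴴ) := mul_le_mul_of_nonneg_left hb (hP k)
      _ = lambdaMax (H k * (H k)ᴴ) * P k := mul_comm _ _

/-- Superiority of TDMA: with `α_k = λ_max(H_k H_kᴴ)` and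
`R̃ = Σ_k P_k · H_k H_kᴴ`, the optimized TDMA sum rate
`log₂(1+‖h‖²P_r) − log₂(1 + ‖h‖²P_r/(1 + Σ_k α_k P_k))` is at least the
optimized joint relaying sum rate
`log₂(1+‖h‖²P_r) − log₂(1 + ‖h‖²P_r/(1 + λ_max(R̃)))`. -/
theorem tdma_ge_joint_relaying (K Mr : ℕ) (hK : 0 < K) (M : Fin K → ℕ)
    (h : EuclideanSpace ℂ (Fin Mr)) (Pr : ℝ) (hPr : 0 ≤ Pr)
    (H : ∀ k, Matrix (Fin Mr) (Fin (M k)) ℂ)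
    (P : Fin K → ℝ) (hP : ∀ k, 0 ≤ P k) :
    Real.logb 2 (1 + ‖h‖ ^ 2 * Pr) -
        Real.logb 2 (1 + ‖h‖ ^ 2 * Pr / (1 + ∑ k, lambdaMax (H k * (H k)ᴴ) * P k)) ≥
      Real.logb 2 (1 + ‖h‖ ^ 2 * Pr) -
        Real.logb 2 (1 + ‖h‖ ^ 2 * Pr / (1 + lambdaMax (∑ k, P k • (H k * (H k)ᴴ)))) := by
  set c := ‖h‖ ^ 2 * Pr with hc
  have hc0 : 0 ≤ c := mul_nonneg (sq_nonneg _) hPr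
  set B := lambdaMax (∑ k, P k • (H k * (H k)ᴴ)) with hB
  set A := ∑ k, lambdaMax (H k * (H k)ᴴ) * P k with hA
  have hBA : B ≤ A := lambdaMax_sum_le H P hP
  have hB0 : 0 ≤ B := lambdaMax_nonneg (sum_smul_posSemidef H P hP)
  have h1B : (0:ℝ) < 1 + B := by linarith
  have h1A : (0:ℝ) < 1 + A := by linarith
  have hdiv : c / (1 + A) ≤ c / (1 + B) := by
    gcongr
  have hlog : Real.logb 2 (1 + c / (1 + A)) ≤ Real.logb 2 (1 + c / (1 + B)) := by
    have : (0:ℝ) < 1 + c / (1 + A) := by positivity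
    exact Real.logb_le_logb_of_le one_lt_two this (by linarith)
  exact sub_le_sub_left hlog _
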